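/- Let u be the convex envelope of f on Ω̄, x ∈ Ω \ C(f), and p a subgradient of u at x. Then there exist points x₁,…,x_k ∈ C(f) with 2 ≤ k ≤ d+1 such that x ∈ conv(x₁,…,x_k), u is affine on conv(x₁,…,x_k), and p is a subgradient of u at every point of conv(x₁,…,x_k). -/

import Mathlib

/-- The convex hull of a compact set in a finite dimensional normed space is compact. -/
lemma myIsCompact_convexHull {E : Type} [NormedAddCommGroup E] [NormedSpace ℝ E]
    [FiniteDimensional ℝ E] {S : Set E} (hS : IsCompact S) : IsCompact (convexHull ℝ S) := by
  classical
  rcases S.eq_empty_or_nonempty with rfl | ⟨s₀, hs₀⟩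
  · simp
  set n := Module.finrank ℝ E + 1 with hn
  set g : (Fin n → ℝ) × (Fin n → E) → E := fun q => ∑ i, q.1 i • q.2 i with hg
  have hgc : Continuous g := by
    apply continuous_finset_sum
    intro i _
    exact ((continuous_apply i).comp continuous_fst).smul
      ((continuous_apply i).comp continuous_snd)
  have hD : IsCompact ((stdSimplex ℝ (Fin n)) ×ˢ (Set.univ.pi fun _ : Fin n => S)) :=
    (isCompact_stdSimplex (𝕜 := ℝ) (ι := Fin n)).prod (isCompact_univ_pi fun _ => hS)
  have himg : convexHull ℝ S =
      g '' ((stdSimplex ℝ (Fin n)) ×ˢ (Set.univ.pi fun _ : Fin n => S)) := by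
    apply Set.Subset.antisymm
    · intro x hx
      rw [convexHull_eq_union] at hx
      simp only [Set.mem_iUnion] at hx
      obtain ⟨t, htS, htai, hxt⟩ := hx
      have hcard : t.card ≤ n := by
        have h1 := htai.card_le_finrank_succ
        have h2 : Module.finrank ℝ (vectorSpan ℝ (Set.range ((↑) : t → E))) ≤
            Module.finrank ℝ E := Submodule.finrank_le _
        simp only [Fintype.card_coe] at h1
        omega
      rw [Finset.convexHull_eq] at hxt
      obtain ⟨w, hw0, hw1, hwx⟩ := hxt
      rw [Finset.centerMass_eq_of_sum_1 _ _ hw1] at hwx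
      set e := t.equivFin with he
      have key : ∀ {M : Type} [inst : AddCommMonoid M] (G : E → M),
          (∑ i : Fin n, if h : (i : ℕ) < t.card then G (e.symm ⟨i, h⟩ : E) else 0)
            = ∑ y ∈ t, G y := by
        intro M inst G
        have hsub : (Finset.univ.map (Fin.castLEEmb hcard)) ⊆ (Finset.univ : Finset (Fin n)) :=
          Finset.subset_univ _
        rw [← Finset.sum_subset hsub]
        · rw [Finset.sum_map]
          have hcongr : ∀ i : Fin t.card,
              (if h : ((Fin.castLEEmb hcard i : Fin n) : ℕ) < t.card
                then G (e.symm ⟨(Fin.castLEEmb hcard i : Fin n), h⟩ : E) else 0)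
              = G ((e.symm i : t) : E) := by
            intro i
            have hi : ((Fin.castLEEmb hcard i : Fin n) : ℕ) < t.card := i.isLt
            rw [dif_pos hi]
            congr 1
          rw [Finset.sum_congr rfl fun i _ => hcongr i]
          rw [show (∑ i : Fin t.card, G ((e.symm i : t) : E)) = ∑ y : t, G (y : E) from
            Equiv.sum_comp e.symm (fun y : t => G (y : E))]
          rw [Finset.sum_coe_sort t (fun y => G y)]
        · intro i _ hi
          have hnlt : ¬ ((i : ℕ) < t.card) := by
            intro hlt
            apply hi
            simp only [Finset.mem_map, Finset.mem_univ, true_and]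
            exact ⟨⟨i, hlt⟩, by simp [Fin.castLEEmb]⟩
          rw [dif_neg hnlt]
      set z : Fin n → E := fun i =>
        if h : (i : ℕ) < t.card then (e.symm ⟨i, h⟩ : E) else s₀ with hz
      set w' : Fin n → ℝ := fun i =>
        if h : (i : ℕ) < t.card then w (e.symm ⟨i, h⟩ : E) else 0 with hw'
      refine ⟨(w', z), ⟨⟨?_, ?_⟩, ?_⟩, ?_⟩
      · intro i
        show (0:ℝ) ≤ w' i
        simp only [hw']
        split_ifs with h
        · exact hw0 _ (Finset.coe_mem _)
        · exact le_refl 0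
      · show (∑ i : Fin n, w' i) = 1
        rw [hw']
        exact (key w).trans hw1
      · intro i _
        show z i ∈ S
        simp only [hz]
        split_ifs with h
        · exact htS (Finset.coe_mem _)
        · exact hs₀
      · show (∑ i : Fin n, w' i • z i) = x
        rw [← hwx]
        simp only [hw', hz, id]
        rw [← key (fun y => w y • y)]
        apply Finset.sum_congr rfl
        intro i _
        by_cases h : (i : ℕ) < t.card
        · rw [dif_pos h, dif_pos h, dif_pos h]
        · rw [dif_neg h, dif_neg h, dif_neg h, zero_smul]
    · rintro x ⟨⟨wgt, zs⟩, ⟨hwmem, hzmem⟩, rfl⟩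
      exact (convex_convexHull ℝ S).sum_mem (fun i _ => hwmem.1 i)
        hwmem.2 (fun i _ => subset_convexHull ℝ S (hzmem i (Set.mem_univ i)))
  rw [himg]
  exact hD.image hgc
open scoped RealInnerProductSpace
lemma myAffineConvexOn {E : Type} [NormedAddCommGroup E] [InnerProductSpace ℝ E]
    (s : Set E) (hs : Convex ℝ s) (g : E → ℝ) (q : E) (φ : E →L[ℝ] ℝ) (ε c₀ : ℝ)
    (hg : ∀ y, g y = ⟪q, y⟫ + ε * φ y + c₀) : ConvexOn ℝ s g := by
  refine ⟨hs, ?_⟩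
  intro y hy z hz a b ha hb hab
  rw [hg, hg, hg]
  simp only [inner_add_right, real_inner_smul_right, map_add, map_smul, smul_eq_mul]
  apply le_of_eq
  linear_combination (-c₀) * hab

/-- Structure of the non-contact set: if `x ∈ Ω \ C(f)` and `p` is a subgradient of the
convex envelope `u` at `x`, then there are `2 ≤ k ≤ d+1` contact points whose convex hull
contains `x`, on which `u` is affine, and `p` is a subgradient of `u` at every point of
that hull. -/
theorem structure_of_noncontact_set
    (d : ℕ) (Ω : Set (EuclideanSpace ℝ (Fin d)))
    (hΩo : IsOpen Ω) (hΩc : Convex ℝ Ω) (hΩb : Bornology.IsBounded Ω)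
    (f u : EuclideanSpace ℝ (Fin d) → ℝ)
    (hf : ContinuousOn f (closure Ω))
    (hu_cvx : ConvexOn ℝ (closure Ω) u)
    (hu_le : ∀ x ∈ closure Ω, u x ≤ f x)
    (hu_max : ∀ v : EuclideanSpace ℝ (Fin d) → ℝ, ConvexOn ℝ (closure Ω) v →
        (∀ x ∈ closure Ω, v x ≤ f x) → ∀ x ∈ closure Ω, v x ≤ u x)
    (x : EuclideanSpace ℝ (Fin d)) (hx : x ∈ Ω) (hnc : u x < f x)
    (p : EuclideanSpace ℝ (Fin d))
    (hp : ∀ y ∈ closure Ω, u x + ⟪p, y - x⟫ ≤ u y) :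
    ∃ (k : ℕ) (pts : Fin k → EuclideanSpace ℝ (Fin d)),
      2 ≤ k ∧ k ≤ d + 1 ∧
      (∀ i, pts i ∈ closure Ω ∧ u (pts i) = f (pts i)) ∧
      x ∈ convexHull ℝ (Set.range pts) ∧
      (∃ (a : EuclideanSpace ℝ (Fin d)) (b : ℝ),
        ∀ y ∈ convexHull ℝ (Set.range pts), u y = ⟪a, y⟫ + b) ∧
      (∀ y ∈ convexHull ℝ (Set.range pts),
        ∀ z ∈ closure Ω, u y + ⟪p, z - y⟫ ≤ u z) := by
  classical
  have hxcl : x ∈ closure Ω := subset_closure hx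
  have hΩcl : IsCompact (closure Ω) := hΩb.isCompact_closure
  have hclconv : Convex ℝ (closure Ω) := hΩc.closure
  set ℓ : EuclideanSpace ℝ (Fin d) → ℝ := fun y => u x + ⟪p, y - x⟫ with hℓdef
  have hℓcont : Continuous ℓ :=
    continuous_const.add (Continuous.inner continuous_const (continuous_id.sub continuous_const))
  have hℓx : ℓ x = u x := by simp [hℓdef]
  have hℓle : ∀ y ∈ closure Ω, ℓ y ≤ u y := hp
  set S : Set (EuclideanSpace ℝ (Fin d)) :=
    closure Ω ∩ (fun y => f y - ℓ y) ⁻¹' Set.Iic 0 with hSdef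
  have hSsub : S ⊆ closure Ω := Set.inter_subset_left
  have hmemS : ∀ y, y ∈ S ↔ y ∈ closure Ω ∧ f y ≤ ℓ y := by
    intro y; simp [hSdef, sub_nonpos]
  have hScl : IsClosed S :=
    (hf.sub hℓcont.continuousOn).preimage_isClosed_of_isClosed isClosed_closure isClosed_Iic
  have hScomp : IsCompact S := hΩcl.of_isClosed_subset hScl hSsub
  have hSuf : ∀ y ∈ S, u y = f y ∧ u y = ℓ y := by
    intro y hy
    rw [hmemS] at hy
    have h1 := hℓle y hy.1
    have h2 := hu_le y hy.1
    constructor <;> linarith [hy.2]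
  have hxhull : x ∈ convexHull ℝ S := by
    by_contra hxh
    have hcomp : IsCompact (convexHull ℝ S) := myIsCompact_convexHull hScomp
    obtain ⟨φ, c, hφS, hφx⟩ :=
      geometric_hahn_banach_closed_point (convex_convexHull ℝ S) hcomp.isClosed hxh
    set K : Set (EuclideanSpace ℝ (Fin d)) := closure Ω ∩ φ ⁻¹' Set.Ici c with hKdef
    have hKcomp : IsCompact K := hΩcl.inter_right (isClosed_Ici.preimage φ.continuous)
    have hxK : x ∈ K := ⟨hxcl, le_of_lt hφx⟩
    have hKpos : ∀ y ∈ K, 0 < f y - ℓ y := by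
      intro y hy
      by_contra hcon
      push_neg at hcon
      have hyS : y ∈ S := (hmemS y).2 ⟨hy.1, by linarith⟩
      have h1 := hφS y (subset_convexHull ℝ S hyS)
      have h2 : c ≤ φ y := hy.2
      linarith
    obtain ⟨y₀, hy₀K, hy₀min⟩ := hKcomp.exists_isMinOn ⟨x, hxK⟩
      ((hf.sub hℓcont.continuousOn).mono Set.inter_subset_left)
    obtain ⟨y₁, hy₁K, hy₁max⟩ := hKcomp.exists_isMaxOn ⟨x, hxK⟩ φ.continuous.continuousOn
    set δ := f y₀ - ℓ y₀ with hδ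
    have hδpos : 0 < δ := hKpos y₀ hy₀K
    set M := φ y₁ with hM
    have hMc : c < M := lt_of_lt_of_le hφx (hy₁max hxK)
    set ε := δ / (M - c) with hε
    have hεpos : 0 < ε := div_pos hδpos (by linarith)
    set c₀ := u x - ⟪p, x⟫ - ε * c with hc₀
    set v : EuclideanSpace ℝ (Fin d) → ℝ :=
      fun y => max (u y) (⟪p, y⟫ + ε * φ y + c₀) with hv
    have haff : ∀ y, ⟪p, y⟫ + ε * φ y + c₀ = ℓ y + ε * (φ y - c) := by
      intro y
      simp only [hℓdef, hc₀, inner_sub_right]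
      ring
    have hvcvx : ConvexOn ℝ (closure Ω) v :=
      hu_cvx.sup (myAffineConvexOn _ hclconv _ p φ ε c₀ (fun y => rfl))
    have hvle : ∀ y ∈ closure Ω, v y ≤ f y := by
      intro y hy
      apply max_le (hu_le y hy)
      rw [haff]
      rcases le_or_gt (φ y) c with hyc | hyc
      · have h1 : ε * (φ y - c) ≤ 0 :=
          mul_nonpos_of_nonneg_of_nonpos (le_of_lt hεpos) (by linarith)
        have h2 := hℓle y hy
        have h3 := hu_le y hy
        linarith
      · have hyK : y ∈ K := ⟨hy, le_of_lt hyc⟩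
        have h1 : δ ≤ f y - ℓ y := hy₀min hyK
        have h2 : φ y ≤ M := hy₁max hyK
        have h3 : ε * (φ y - c) ≤ ε * (M - c) :=
          mul_le_mul_of_nonneg_left (by linarith) (le_of_lt hεpos)
        have h4 : ε * (M - c) = δ := div_mul_cancel₀ δ (by linarith : M - c ≠ 0)
        linarith
    have hcontr := hu_max v hvcvx hvle x hxcl
    have hvx : ℓ x + ε * (φ x - c) ≤ v x := by
      rw [← haff]; exact le_max_right _ _
    rw [hℓx] at hvx
    have hpos : 0 < ε * (φ x - c) := mul_pos hεpos (by linarith)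
    linarith
  rw [convexHull_eq_union] at hxhull
  simp only [Set.mem_iUnion] at hxhull
  obtain ⟨t, htS, htai, hxt⟩ := hxhull
  have hcard_le : t.card ≤ d + 1 := by
    have h1 := htai.card_le_finrank_succ
    have h2 : Module.finrank ℝ
        (vectorSpan ℝ (Set.range ((↑) : t → EuclideanSpace ℝ (Fin d)))) ≤
        Module.finrank ℝ (EuclideanSpace ℝ (Fin d)) := Submodule.finrank_le _
    have h3 : Module.finrank ℝ (EuclideanSpace ℝ (Fin d)) = d := finrank_euclideanSpace_fin
    simp only [Fintype.card_coe] at h1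
    omega
  have hcard2 : 2 ≤ t.card := by
    have h0 : t.card ≠ 0 := by
      intro h
      rw [Finset.card_eq_zero] at h
      subst h
      simp only [Finset.coe_empty, convexHull_empty] at hxt
      exact hxt
    have h1 : t.card ≠ 1 := by
      intro h
      rw [Finset.card_eq_one] at h
      obtain ⟨y, rfl⟩ := h
      simp only [Finset.coe_singleton, convexHull_singleton, Set.mem_singleton_iff] at hxt
      have hyS : y ∈ S := htS (by simp)
      have hxu := (hSuf y hyS).1
      rw [← hxt] at hxu
      linarith
    omega
  set pts : Fin t.card → EuclideanSpace ℝ (Fin d) := fun i => (t.equivFin.symm i : _) with hpts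
  have hrange : Set.range pts = (↑t : Set (EuclideanSpace ℝ (Fin d))) := by
    ext y
    constructor
    · rintro ⟨i, rfl⟩
      exact (t.equivFin.symm i).2
    · intro hy
      exact ⟨t.equivFin ⟨y, hy⟩, by simp [hpts]⟩
  have hHsub : convexHull ℝ (↑t : Set (EuclideanSpace ℝ (Fin d))) ⊆ closure Ω :=
    convexHull_min (htS.trans hSsub) hclconv
  have hUL : ∀ y ∈ convexHull ℝ (↑t : Set (EuclideanSpace ℝ (Fin d))), u y = ℓ y := by
    intro y hy
    have h1 : ℓ y ≤ u y := hℓle y (hHsub hy)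
    have heq : (fun y => u y - ℓ y) =
        fun y => u y + (⟪-p, y⟫ + (0 : ℝ) * (0 : EuclideanSpace ℝ (Fin d) →L[ℝ] ℝ) y +
          (⟪p, x⟫ - u x)) := by
      funext y
      simp only [hℓdef, inner_sub_right, inner_neg_left]
      ring
    have hg : ConvexOn ℝ (closure Ω) (fun y => u y - ℓ y) := by
      rw [heq]
      exact hu_cvx.add (myAffineConvexOn _ hclconv _ (-p) 0 0 (⟪p, x⟫ - u x) (fun y => rfl))
    obtain ⟨y₀, hy₀t, hge⟩ := hg.exists_ge_of_mem_convexHull (htS.trans hSsub) hy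
    have h0 : u y₀ - ℓ y₀ = 0 := by
      have := (hSuf y₀ (htS hy₀t)).2
      linarith
    have : u y - ℓ y ≤ 0 := by
      calc u y - ℓ y ≤ u y₀ - ℓ y₀ := hge
      _ = 0 := h0
    linarith
  refine ⟨t.card, pts, hcard2, hcard_le, ?_, ?_, ?_, ?_⟩
  · intro i
    have hi : pts i ∈ S := htS (t.equivFin.symm i).2
    exact ⟨hSsub hi, (hSuf _ hi).1⟩
  · rw [hrange]; exact hxt
  · refine ⟨p, u x - ⟪p, x⟫, ?_⟩
    intro y hy
    rw [hrange] at hy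
    rw [hUL y hy]
    simp only [hℓdef, inner_sub_right]
    ring
  · intro y hy z hz
    rw [hrange] at hy
    rw [hUL y hy]
    have h1 := hp z hz
    simp only [hℓdef, inner_sub_right] at h1 ⊢
    linarith
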